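/- For v, w ∈ W, let A_{v,w} : V → V be the linear map with A_{v,w}(u) = 0 for u ∈ W, A_{v,w}(η) = η(w)v − η(v)w for η ∈ W*, and A_{v,w}(e) = 0. Then for all v, w ∈ W, x ∈ V and a ∈ Δ: π(A_{v,w}(x) ⊗ a) + π(x ⊗ X_v(X_w(a))) = X_v(X_w(π(x ⊗ a))). (This is the equivariance of π with respect to the summand ⋀²W of 𝔰𝔬(2m+1).) -/

import Mathlib

noncomputable section

open TensorProduct

/-- `W = ℂ^m`. -/
abbrev SpinW (m : ℕ) : Type := Fin m → ℂ

/-- `Δ = ⋀ W`, the exterior algebra of `W`. -/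
abbrev SpinDelta (m : ℕ) : Type := ExteriorAlgebra ℂ (SpinW m)

/-- `V = W ⊕ W* ⊕ ℂe`. -/
abbrev SpinV (m : ℕ) : Type := SpinW m × Module.Dual ℂ (SpinW m) × ℂ

/-- The standard basis vector `w_i` of `W`. -/
def wB (m : ℕ) (i : Fin m) : SpinW m := Pi.single i 1

/-- The dual basis vector `w_i*` of `W*`. -/
def wD (m : ℕ) (i : Fin m) : Module.Dual ℂ (SpinW m) := LinearMap.proj i

/-- `w_i` regarded as an element of `V`. -/
def wV (m : ℕ) (i : Fin m) : SpinV m := (wB m i, 0, 0)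

/-- `w_i*` regarded as an element of `V`. -/
def wsV (m : ℕ) (i : Fin m) : SpinV m := (0, wD m i, 0)

/-- `e` regarded as an element of `V`. -/
def eV (m : ℕ) : SpinV m := (0, 0, 1)

/-- `X_v : Δ → Δ`, left exterior multiplication by `v ∈ W`. -/
def Xop (m : ℕ) (v : SpinW m) : SpinDelta m →ₗ[ℂ] SpinDelta m :=
  LinearMap.mulLeft ℂ (ExteriorAlgebra.ι ℂ v)

/-- `D_λ : Δ → Δ`, the interior product with `λ ∈ W*`;
it satisfies `D_λ(v₁ ∧ ⋯ ∧ v_k) = Σ (−1)^{i−1} λ(v_i) v₁ ∧ ⋯ ∧ v̂_i ∧ ⋯ ∧ v_k`. -/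
def Dop (m : ℕ) (lam : Module.Dual ℂ (SpinW m)) : SpinDelta m →ₗ[ℂ] SpinDelta m :=
  CliffordAlgebra.contractLeft (Q := (0 : QuadraticForm ℂ (SpinW m))) lam

/-- The grading operator `D : Δ → Δ` acting by `(−1)^k` on `⋀^k W`. -/
def Gop (m : ℕ) : SpinDelta m →ₗ[ℂ] SpinDelta m :=
  (CliffordAlgebra.involute (Q := (0 : QuadraticForm ℂ (SpinW m)))).toLinearMap

/-- Projection `V → W`. -/
def pW (m : ℕ) : SpinV m →ₗ[ℂ] SpinW m := LinearMap.fst ℂ _ _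

/-- Projection `V → W*`. -/
def pD (m : ℕ) : SpinV m →ₗ[ℂ] Module.Dual ℂ (SpinW m) :=
  (LinearMap.fst ℂ _ ℂ).comp (LinearMap.snd ℂ (SpinW m) _)

/-- Projection `V → ℂ` (the `e`-coordinate). -/
def pC (m : ℕ) : SpinV m →ₗ[ℂ] ℂ :=
  (LinearMap.snd ℂ _ ℂ).comp (LinearMap.snd ℂ (SpinW m) _)

/-- Inclusion `W → V`. -/
def iW (m : ℕ) : SpinW m →ₗ[ℂ] SpinV m :=
  LinearMap.inl ℂ (SpinW m) (Module.Dual ℂ (SpinW m) × ℂ)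

/-- Inclusion `W* → V`. -/
def iD (m : ℕ) : Module.Dual ℂ (SpinW m) →ₗ[ℂ] SpinV m :=
  (LinearMap.inr ℂ (SpinW m) _).comp (LinearMap.inl ℂ (Module.Dual ℂ (SpinW m)) ℂ)

/-- Inclusion `ℂe → V`. -/
def iC (m : ℕ) : ℂ →ₗ[ℂ] SpinV m :=
  (LinearMap.inr ℂ (SpinW m) _).comp (LinearMap.inr ℂ (Module.Dual ℂ (SpinW m)) ℂ)

/-- The symmetric bilinear form `ω` on `V`:
`ω((u,η,c),(u',η',c')) = η'(u) + η(u') + c·c'`; so `ω(w_i, w_j*) = δ_{ij}`,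
`ω(e,e) = 1`, `W` and `W*` are isotropic and `e` is orthogonal to both. -/
def omegaB (m : ℕ) : SpinV m →ₗ[ℂ] SpinV m →ₗ[ℂ] ℂ :=
  ((((LinearMap.llcomp ℂ (SpinV m) (SpinW m) ℂ).flip (pW m)).comp (pD m)).flip
  + ((LinearMap.llcomp ℂ (SpinV m) (SpinW m) ℂ).flip (pW m)).comp (pD m))
  + (pC m).smulRight (pC m)

/-- The spin projection `π : V ⊗ Δ → Δ` as a bilinear map:
`(v,λ,c) ⊗ a ↦ √2 X_v(a) + √2 D_λ(a) + c D(a)`. -/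
def piB (m : ℕ) : SpinV m →ₗ[ℂ] SpinDelta m →ₗ[ℂ] SpinDelta m :=
  (Real.sqrt 2 : ℂ) • (((LinearMap.mul ℂ (SpinDelta m)).comp ((ExteriorAlgebra.ι ℂ).comp (pW m)))
      + (CliffordAlgebra.contractLeft (Q := (0 : QuadraticForm ℂ (SpinW m)))).comp (pD m))
  + (pC m).smulRight (Gop m)

/-- The spin projection `π : V ⊗ Δ → Δ`. -/
def piMap (m : ℕ) : SpinV m ⊗[ℂ] SpinDelta m →ₗ[ℂ] SpinDelta m :=
  TensorProduct.lift (piB m)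

/-- The spin injection `ι : Δ → V ⊗ Δ`,
`a ↦ √2 Σᵢ (wᵢ ⊗ D_{wᵢ*}(a) + wᵢ* ⊗ X_{wᵢ}(a)) + e ⊗ D(a)`. -/
def iotaMap (m : ℕ) : SpinDelta m →ₗ[ℂ] SpinV m ⊗[ℂ] SpinDelta m :=
  (Real.sqrt 2 : ℂ) • (∑ i : Fin m,
      ((TensorProduct.mk ℂ (SpinV m) (SpinDelta m) (wV m i)).comp (Dop m (wD m i))
        + (TensorProduct.mk ℂ (SpinV m) (SpinDelta m) (wsV m i)).comp (Xop m (wB m i))))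
  + (TensorProduct.mk ℂ (SpinV m) (SpinDelta m) (eV m)).comp (Gop m)

/-- The invariant element `θ = Σᵢ (wᵢ ⊗ wᵢ* + wᵢ* ⊗ wᵢ) + e ⊗ e ∈ V ⊗ V`. -/
def theta (m : ℕ) : SpinV m ⊗[ℂ] SpinV m :=
  (∑ i : Fin m, (wV m i ⊗ₜ wsV m i + wsV m i ⊗ₜ wV m i)) + eV m ⊗ₜ eV m

/-- Evaluation of a dual vector at `w ∈ W`. -/
def evalW (m : ℕ) (w : SpinW m) : Module.Dual ℂ (SpinW m) →ₗ[ℂ] ℂ :=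
  Module.Dual.eval ℂ (SpinW m) w

/-- `A_{v,w} : V → V`, with `A(u) = 0`, `A(η) = η(w)v − η(v)w`, `A(e) = 0`. -/
def Amap (m : ℕ) (v w : SpinW m) : SpinV m →ₗ[ℂ] SpinV m :=
  (iW m) ∘ₗ (((evalW m w).smulRight v - (evalW m v).smulRight w) ∘ₗ pD m)

/-- `B_λ : V → V`, with `B(u) = λ(u)e`, `B(η) = 0`, `B(e) = −λ`. -/
def Bmap (m : ℕ) (lam : Module.Dual ℂ (SpinW m)) : SpinV m →ₗ[ℂ] SpinV m :=
  (iC m) ∘ₗ (lam ∘ₗ pW m) - (iD m) ∘ₗ ((pC m).smulRight lam)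

/-- `C_v : V → V`, with `C(u) = 0`, `C(η) = −η(v)e`, `C(e) = v`. -/
def Cmap (m : ℕ) (v : SpinW m) : SpinV m →ₗ[ℂ] SpinV m :=
  (iW m) ∘ₗ ((pC m).smulRight v) - (iC m) ∘ₗ ((evalW m v) ∘ₗ pD m)

/-- `H_{v,λ} : V → V`, with `H(u) = λ(u)v`, `H(η) = −η(v)λ`, `H(e) = 0`. -/
def Hmap (m : ℕ) (v : SpinW m) (lam : Module.Dual ℂ (SpinW m)) : SpinV m →ₗ[ℂ] SpinV m :=
  (iW m) ∘ₗ ((lam ∘ₗ pW m).smulRight v) - (iD m) ∘ₗ (((evalW m v) ∘ₗ pD m).smulRight lam)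

/-- `E_{λ,μ} : V → V`, with `E(u) = μ(u)λ − λ(u)μ`, `E(η) = 0`, `E(e) = 0`. -/
def Emap (m : ℕ) (lam mu : Module.Dual ℂ (SpinW m)) : SpinV m →ₗ[ℂ] SpinV m :=
  (iD m) ∘ₗ ((mu ∘ₗ pW m).smulRight lam - (lam ∘ₗ pW m).smulRight mu)

/-- The contraction `ω ⊗ id_Δ : V ⊗ (V ⊗ Δ) → Δ`, `x ⊗ y ⊗ b ↦ ω(x,y) b`. -/
def contrMap (m : ℕ) : SpinV m ⊗[ℂ] (SpinV m ⊗[ℂ] SpinDelta m) →ₗ[ℂ] SpinDelta m :=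
  (TensorProduct.lid ℂ (SpinDelta m)).toLinearMap
    ∘ₗ (TensorProduct.map (TensorProduct.lift (omegaB m)) LinearMap.id)
    ∘ₗ (TensorProduct.assoc ℂ (SpinV m) (SpinV m) (SpinDelta m)).symm.toLinearMap

/-- The swap `τ ⊗ id_Δ : V ⊗ (V ⊗ Δ) → V ⊗ (V ⊗ Δ)`, `x ⊗ y ⊗ b ↦ y ⊗ x ⊗ b`. -/
def swapMap (m : ℕ) :
    SpinV m ⊗[ℂ] (SpinV m ⊗[ℂ] SpinDelta m) →ₗ[ℂ] SpinV m ⊗[ℂ] (SpinV m ⊗[ℂ] SpinDelta m) :=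
  (TensorProduct.assoc ℂ (SpinV m) (SpinV m) (SpinDelta m)).toLinearMap
    ∘ₗ (LinearMap.rTensor (SpinDelta m) (TensorProduct.comm ℂ (SpinV m) (SpinV m)).toLinearMap)
    ∘ₗ (TensorProduct.assoc ℂ (SpinV m) (SpinV m) (SpinDelta m)).symm.toLinearMap

lemma piMap_tmul (m : ℕ) (y : SpinV m) (a : SpinDelta m) :
    piMap m (y ⊗ₜ a) = (Real.sqrt 2 : ℂ) • (ExteriorAlgebra.ι ℂ y.1 * a
      + CliffordAlgebra.contractLeft (Q := (0 : QuadraticForm ℂ (SpinW m))) y.2.1 a)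
      + y.2.2 • CliffordAlgebra.involute (Q := (0 : QuadraticForm ℂ (SpinW m))) a := by
  simp [piMap, piB, Gop, pW, pD, pC]


lemma iota_anticomm (m : ℕ) (a b : SpinW m) :
    ExteriorAlgebra.ι ℂ a * ExteriorAlgebra.ι ℂ b
      = - (ExteriorAlgebra.ι ℂ b * ExteriorAlgebra.ι ℂ a) := by
  have h := CliffordAlgebra.ι_mul_ι_add_swap (Q := (0 : QuadraticForm ℂ (SpinW m))) a b
  simp only [QuadraticMap.polar, QuadraticMap.zero_apply, sub_zero, zero_sub, neg_zero,
    map_zero] at h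
  exact eq_neg_of_add_eq_zero_left h

set_option maxHeartbeats 1600000 in
/-- Equivariance of `π` with respect to the summand `⋀²W` of `𝔰𝔬(2m+1)`:
`π(A_{v,w}(x) ⊗ a) + π(x ⊗ X_v(X_w(a))) = X_v(X_w(π(x ⊗ a)))`. -/
theorem spin_projection_equivariant_wedgeW (m : ℕ) (hm : 1 ≤ m)
    (v w : SpinW m) (x : SpinV m) (a : SpinDelta m) :
    piMap m ((Amap m v w x) ⊗ₜ a) + piMap m (x ⊗ₜ (Xop m v (Xop m w a)))
      = Xop m v (Xop m w (piMap m (x ⊗ₜ a))) := by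
  obtain ⟨u, eta, c⟩ := x
  have hA : Amap m v w (u, eta, c) = (eta w • v - eta v • w, 0, 0) := by
    simp [Amap, iW, pD, evalW, pW, pC]
    rfl
  rw [hA]
  simp only [piMap_tmul, Xop, LinearMap.mulLeft_apply]
  set ιv := ExteriorAlgebra.ι ℂ v with hιv
  set ιw := ExteriorAlgebra.ι ℂ w with hιw
  set ιu := ExteriorAlgebra.ι ℂ u with hιu
  have hcl : ∀ b : SpinDelta m,
      CliffordAlgebra.contractLeft (Q := (0 : QuadraticForm ℂ (SpinW m))) eta (ιv * (ιw * b))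
      = eta v • (ιw * b) - eta w • (ιv * b) + ιv * (ιw *
        CliffordAlgebra.contractLeft (Q := (0 : QuadraticForm ℂ (SpinW m))) eta b) := by
    intro b
    rw [hιv, hιw]
    rw [CliffordAlgebra.contractLeft_ι_mul, CliffordAlgebra.contractLeft_ι_mul]
    rw [mul_sub, mul_smul_comm]
    abel
  have hinv : CliffordAlgebra.involute (Q := (0 : QuadraticForm ℂ (SpinW m))) (ιv * (ιw * a))
      = ιv * (ιw * CliffordAlgebra.involute (Q := (0 : QuadraticForm ℂ (SpinW m))) a) := by
    rw [hιv, hιw]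
    simp [mul_assoc]
  have huvw : ιu * (ιv * (ιw * a)) = ιv * (ιw * (ιu * a)) := by
    rw [← mul_assoc, iota_anticomm m u v, ← hιu, ← hιv, neg_mul, mul_assoc, ← mul_assoc ιu,
      iota_anticomm m u w, ← hιu, ← hιw, neg_mul, mul_assoc]
    simp [mul_assoc]
  rw [hcl, hinv, huvw]
  simp only [map_sub, map_smul, sub_mul, smul_mul_assoc, map_zero, LinearMap.zero_apply,
    zero_smul, add_zero, zero_add, ← hιv, ← hιw, ← hιu]
  simp only [mul_add, mul_smul_comm, smul_add, smul_sub, smul_smul]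
  module
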